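/- Define the linear map Ψ₃ on M₃(ℂ) by Ψ₃(X) = [[x₁₁+x₃₃, −x₁₂, −x₁₃], [−x₂₁, x₁₁+x₂₂, −x₃₂], [−x₃₁, −x₂₃, x₂₂+x₃₃]]. Then Ψ₃ is a positive linear map: Ψ₃(X) is positive semidefinite for every positive semidefinite X ∈ M₃(ℂ). -/

import Mathlib

open Matrix Complex ComplexOrder

/-- The map Ψ₃ of the paper: it agrees with the Choi map except that its (2,3) entry is
−x₃₂ and its (3,2) entry is −x₂₃. -/
noncomputable def Psi3 (X : Matrix (Fin 3) (Fin 3) ℂ) : Matrix (Fin 3) (Fin 3) ℂ :=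
  !![X 0 0 + X 2 2, -X 0 1, -X 0 2;
     -X 1 0, X 0 0 + X 1 1, -X 2 1;
     -X 2 0, -X 1 2, X 1 1 + X 2 2]

private lemma cbrt_exists {p : ℝ} (hp : 0 ≤ p) : ∃ x : ℝ, 0 ≤ x ∧ x ^ 3 = p := by
  refine ⟨p ^ ((1:ℝ)/3), Real.rpow_nonneg hp _, ?_⟩
  rw [← Real.rpow_natCast (p ^ ((1:ℝ)/3)) 3, ← Real.rpow_mul hp]
  norm_num

set_option maxHeartbeats 1000000 in
private lemma choi_core (u v w p q r : ℝ) (hu : 0 ≤ u) (hv : 0 ≤ v) (hw : 0 ≤ w)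
    (hp : 0 ≤ p) (hq : 0 ≤ q) (hr : 0 ≤ r) (h : u * v * w = p * q * r) :
    2*(u*v) + 2*(u*w) + 2*(v*w) ≤ u^2 + v^2 + w^2 + p^2 + q^2 + r^2 := by
  obtain ⟨x, hx0, hx3⟩ := cbrt_exists hp
  obtain ⟨y, hy0, hy3⟩ := cbrt_exists hq
  obtain ⟨z, hz0, hz3⟩ := cbrt_exists hr
  set n := x * y * z with hn
  have hn0 : 0 ≤ n := by positivity
  have hn3 : n ^ 3 = u * v * w := by rw [h, ← hx3, ← hy3, ← hz3]; ring
  have h1 : 3 * n ^ 2 ≤ p ^ 2 + q ^ 2 + r ^ 2 := by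
    rw [← hx3, ← hy3, ← hz3, hn]
    nlinarith [sq_nonneg (x^2 - y^2), sq_nonneg (y^2 - z^2), sq_nonneg (x^2 - z^2),
      sq_nonneg x, sq_nonneg y, sq_nonneg z,
      add_nonneg (add_nonneg (sq_nonneg x) (sq_nonneg y)) (sq_nonneg z)]
  have h2 : 4 * (v * w) ≤ (u - v - w) ^ 2 + 3 * n ^ 2 := by
    set s := Real.sqrt (v * w) with hsdef
    have hs0 : 0 ≤ s := Real.sqrt_nonneg _
    have hs2 : s ^ 2 = v * w := Real.sq_sqrt (mul_nonneg hv hw)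
    have hvw : 2 * s ≤ v + w := by
      have h' : v * w ≤ ((v + w)/2)^2 := by nlinarith [sq_nonneg (v - w)]
      have h'' := Real.sqrt_le_sqrt h'
      rw [Real.sqrt_sq (by positivity)] at h''
      rw [hsdef]; linarith
    have hn3' : n ^ 3 = u * s ^ 2 := by rw [hs2, hn3]; ring
    rcases le_or_gt u (2 * s) with hcase | hcase
    · obtain ⟨a, ha0, ha3⟩ := cbrt_exists hu
      obtain ⟨b, hb0, hb3⟩ := cbrt_exists hs0
      have hnab : n = a * b ^ 2 := by
        have hcube : n ^ 3 = (a * b ^ 2) ^ 3 := by rw [hn3', ← ha3, ← hb3]; ring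
        exact (pow_left_inj₀ hn0 (by positivity) three_ne_zero).mp hcube
      have key : 4 * s * u - u ^ 2 ≤ 3 * n ^ 2 := by
        rw [hnab, ← ha3, ← hb3]
        nlinarith [mul_nonneg (sq_nonneg (a * (a - b)))
          (by positivity : (0:ℝ) ≤ (a + b) ^ 2 + 2 * b ^ 2)]
      nlinarith [hs2, hvw, hcase, key, sq_nonneg (v + w - 2*s)]
    · have h8 : 2 * s ^ 3 ≤ n ^ 3 := by nlinarith [hn3', sq_nonneg s]
      have h6 : (2*s^3) * (2*s^3) ≤ n^3 * n^3 :=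
        mul_le_mul h8 h8 (by positivity) (by positivity)
      have h7 : (4*s^2)^3 ≤ (3*n^2)^3 := by nlinarith [pow_nonneg hs0 6]
      have hkey : 4 * s ^ 2 ≤ 3 * n ^ 2 :=
        (pow_le_pow_iff_left₀ (by positivity) (by positivity) three_ne_zero).mp h7
      nlinarith [hkey, hs2, sq_nonneg (u - v - w)]
  nlinarith [h1, h2]

private lemma choi_real (a b c t1 t2 t3 : ℝ) (ha : 0 ≤ a) (hb : 0 ≤ b) (hc : 0 ≤ c)
    (h1 : 0 ≤ t1) (h2 : 0 ≤ t2) (h3 : 0 ≤ t3) :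
    2*(a*b*t1*t2) + 2*(a*c*t1*t3) + 2*(b*c*t2*t3) ≤
      a^2*t1^2 + a^2*t2^2 + b^2*t2^2 + b^2*t3^2 + c^2*t1^2 + c^2*t3^2 := by
  have := choi_core (a*t1) (b*t2) (c*t3) (a*t2) (b*t3) (c*t1)
    (by positivity) (by positivity) (by positivity) (by positivity) (by positivity)
    (by positivity) (by ring)
  nlinarith [this]

open ComplexConjugate

private lemma rank1 (z1 z2 z3 v1 v2 v3 : ℂ) :
    0 ≤ (conj z1*z1 + conj z3*z3)*(conj v1*v1) + (conj z1*z1 + conj z2*z2)*(conj v2*v2)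
      + (conj z2*z2 + conj z3*z3)*(conj v3*v3)
      - conj z1*z2*(conj v1*v2) - conj z2*z1*(conj v2*v1)
      - conj z1*z3*(conj v1*v3) - conj z3*z1*(conj v3*v1)
      - conj z3*z2*(conj v2*v3) - conj z2*z3*(conj v3*v2) := by
  have hE : (conj z1*z1 + conj z3*z3)*(conj v1*v1) + (conj z1*z1 + conj z2*z2)*(conj v2*v2)
      + (conj z2*z2 + conj z3*z3)*(conj v3*v3)
      - conj z1*z2*(conj v1*v2) - conj z2*z1*(conj v2*v1)
      - conj z1*z3*(conj v1*v3) - conj z3*z1*(conj v3*v1)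
      - conj z3*z2*(conj v2*v3) - conj z2*z3*(conj v3*v2)
      = (((Complex.normSq z1 * Complex.normSq v1 + Complex.normSq z3 * Complex.normSq v1
        + Complex.normSq z1 * Complex.normSq v2 + Complex.normSq z2 * Complex.normSq v2
        + Complex.normSq z2 * Complex.normSq v3 + Complex.normSq z3 * Complex.normSq v3
        - 2*((conj z1*z2*(conj v1*v2)).re + (conj z1*z3*(conj v1*v3)).re
            + (conj z3*z2*(conj v2*v3)).re)) : ℝ) : ℂ) := by
    apply Complex.ext <;>
      simp [Complex.normSq_apply, Complex.mul_re, Complex.mul_im, Complex.add_re,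
        Complex.add_im, Complex.sub_re, Complex.sub_im] <;> ring
  rw [hE, Complex.zero_le_real]
  have h12 : (conj z1*z2*(conj v1*v2)).re ≤
      ‖z1‖ * ‖z2‖ * (‖v1‖ * ‖v2‖) := by
    calc (conj z1*z2*(conj v1*v2)).re ≤ ‖(conj z1*z2*(conj v1*v2))‖ :=
          Complex.re_le_norm _
      _ = ‖z1‖ * ‖z2‖ * (‖v1‖ * ‖v2‖) := by
          rw [norm_mul, norm_mul, norm_mul, Complex.norm_conj, Complex.norm_conj] <;> try ring
  have h13 : (conj z1*z3*(conj v1*v3)).re ≤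
      ‖z1‖ * ‖z3‖ * (‖v1‖ * ‖v3‖) := by
    calc (conj z1*z3*(conj v1*v3)).re ≤ ‖(conj z1*z3*(conj v1*v3))‖ :=
          Complex.re_le_norm _
      _ = _ := by rw [norm_mul, norm_mul, norm_mul, Complex.norm_conj, Complex.norm_conj] <;> try ring
  have h23 : (conj z3*z2*(conj v2*v3)).re ≤
      ‖z2‖ * ‖z3‖ * (‖v2‖ * ‖v3‖) := by
    calc (conj z3*z2*(conj v2*v3)).re ≤ ‖(conj z3*z2*(conj v2*v3))‖ :=
          Complex.re_le_norm _
      _ = ‖z2‖ * ‖z3‖ * (‖v2‖ * ‖v3‖) := by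
          rw [norm_mul, norm_mul, norm_mul, Complex.norm_conj, Complex.norm_conj] <;> try ring
  rw [← Complex.sq_norm z1, ← Complex.sq_norm z2, ← Complex.sq_norm z3,
    ← Complex.sq_norm v1, ← Complex.sq_norm v2, ← Complex.sq_norm v3]
  have key := choi_real (‖z1‖) (‖z2‖) (‖z3‖)
    (‖v1‖) (‖v2‖) (‖v3‖)
    (norm_nonneg _) (norm_nonneg _) (norm_nonneg _)
    (norm_nonneg _) (norm_nonneg _) (norm_nonneg _)
  linarith [h12, h13, h23, key]

/-- Ψ₃ is a positive map: it sends positive semidefinite matrices to positive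
semidefinite matrices. -/
theorem psi3_positive (X : Matrix (Fin 3) (Fin 3) ℂ) (hX : X.PosSemidef) :
    (Psi3 X).PosSemidef := by

  have herm : (Psi3 X).IsHermitian := by
    have he : ∀ i j, star (X i j) = X j i := fun i j => by
      rw [← congrFun (congrFun hX.1 j) i, Matrix.conjTranspose_apply]
    unfold Matrix.IsHermitian
    ext i j
    fin_cases i <;> fin_cases j <;>
      simp [Psi3, Matrix.conjTranspose_apply, star_add, star_neg, he]
  obtain ⟨B, rfl⟩ : ∃ B : Matrix (Fin 3) (Fin 3) ℂ, X = Bᴴ * B := by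
    open scoped MatrixOrder in exact CStarAlgebra.nonneg_iff_eq_star_mul_self.mp hX.nonneg
  refine .of_dotProduct_mulVec_nonneg herm fun x => ?_
  have hexp : star x ⬝ᵥ ((Psi3 (Bᴴ * B)) *ᵥ x) =
      (((starRingEnd ℂ) (B 0 0)*(B 0 0) + (starRingEnd ℂ) (B 0 2)*(B 0 2))*((starRingEnd ℂ) (x 0)*(x 0))
        + ((starRingEnd ℂ) (B 0 0)*(B 0 0) + (starRingEnd ℂ) (B 0 1)*(B 0 1))*((starRingEnd ℂ) (x 1)*(x 1))
        + ((starRingEnd ℂ) (B 0 1)*(B 0 1) + (starRingEnd ℂ) (B 0 2)*(B 0 2))*((starRingEnd ℂ) (x 2)*(x 2))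
        - (starRingEnd ℂ) (B 0 0)*(B 0 1)*((starRingEnd ℂ) (x 0)*(x 1))
        - (starRingEnd ℂ) (B 0 1)*(B 0 0)*((starRingEnd ℂ) (x 1)*(x 0))
        - (starRingEnd ℂ) (B 0 0)*(B 0 2)*((starRingEnd ℂ) (x 0)*(x 2))
        - (starRingEnd ℂ) (B 0 2)*(B 0 0)*((starRingEnd ℂ) (x 2)*(x 0))
        - (starRingEnd ℂ) (B 0 2)*(B 0 1)*((starRingEnd ℂ) (x 1)*(x 2))
        - (starRingEnd ℂ) (B 0 1)*(B 0 2)*((starRingEnd ℂ) (x 2)*(x 1)))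
      + (((starRingEnd ℂ) (B 1 0)*(B 1 0) + (starRingEnd ℂ) (B 1 2)*(B 1 2))*((starRingEnd ℂ) (x 0)*(x 0))
        + ((starRingEnd ℂ) (B 1 0)*(B 1 0) + (starRingEnd ℂ) (B 1 1)*(B 1 1))*((starRingEnd ℂ) (x 1)*(x 1))
        + ((starRingEnd ℂ) (B 1 1)*(B 1 1) + (starRingEnd ℂ) (B 1 2)*(B 1 2))*((starRingEnd ℂ) (x 2)*(x 2))
        - (starRingEnd ℂ) (B 1 0)*(B 1 1)*((starRingEnd ℂ) (x 0)*(x 1))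
        - (starRingEnd ℂ) (B 1 1)*(B 1 0)*((starRingEnd ℂ) (x 1)*(x 0))
        - (starRingEnd ℂ) (B 1 0)*(B 1 2)*((starRingEnd ℂ) (x 0)*(x 2))
        - (starRingEnd ℂ) (B 1 2)*(B 1 0)*((starRingEnd ℂ) (x 2)*(x 0))
        - (starRingEnd ℂ) (B 1 2)*(B 1 1)*((starRingEnd ℂ) (x 1)*(x 2))
        - (starRingEnd ℂ) (B 1 1)*(B 1 2)*((starRingEnd ℂ) (x 2)*(x 1)))
      + (((starRingEnd ℂ) (B 2 0)*(B 2 0) + (starRingEnd ℂ) (B 2 2)*(B 2 2))*((starRingEnd ℂ) (x 0)*(x 0))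
        + ((starRingEnd ℂ) (B 2 0)*(B 2 0) + (starRingEnd ℂ) (B 2 1)*(B 2 1))*((starRingEnd ℂ) (x 1)*(x 1))
        + ((starRingEnd ℂ) (B 2 1)*(B 2 1) + (starRingEnd ℂ) (B 2 2)*(B 2 2))*((starRingEnd ℂ) (x 2)*(x 2))
        - (starRingEnd ℂ) (B 2 0)*(B 2 1)*((starRingEnd ℂ) (x 0)*(x 1))
        - (starRingEnd ℂ) (B 2 1)*(B 2 0)*((starRingEnd ℂ) (x 1)*(x 0))
        - (starRingEnd ℂ) (B 2 0)*(B 2 2)*((starRingEnd ℂ) (x 0)*(x 2))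
        - (starRingEnd ℂ) (B 2 2)*(B 2 0)*((starRingEnd ℂ) (x 2)*(x 0))
        - (starRingEnd ℂ) (B 2 2)*(B 2 1)*((starRingEnd ℂ) (x 1)*(x 2))
        - (starRingEnd ℂ) (B 2 1)*(B 2 2)*((starRingEnd ℂ) (x 2)*(x 1))) := by
    simp [Psi3, dotProduct, Matrix.mulVec, Matrix.mul_apply, Fin.sum_univ_three,
      Matrix.conjTranspose_apply, Complex.star_def]
    ring
  rw [hexp]
  exact add_nonneg (add_nonneg (rank1 _ _ _ _ _ _) (rank1 _ _ _ _ _ _)) (rank1 _ _ _ _ _ _)
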